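/- arXiv:2312.06180 — 3 statements merged into one kernel-verified Lean document; each statement's English description precedes it below -/
import Mathlib

section
/- Coppel's inequality: if x : [t₀,∞) → ℝⁿ satisfies ẋ(t) = A(t) x(t) with A continuous, and there exists β > 0 with μ_p(A(t)) ≤ −β for all t ≥ t₀, then ‖x(t)‖_p ≤ e^{−β(t−t₀)} ‖x(t₀)‖_p for all t ≥ t₀. -/
open Filter Topology Matrix
open scoped ENNReal
set_option linter.unusedSectionVars false

/-- The vector `p`-norm. -/
noncomputable def pnorm {ι : Type*} [Fintype ι] (p : ℝ) (v : ι → ℝ) : ℝ :=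
  (∑ i, |v i| ^ p) ^ (1 / p)

/-- The operator norm on matrices induced by the vector `p`-norm. -/
noncomputable def opNorm {ι κ : Type*} [Fintype ι] [Fintype κ]
    (p : ℝ) (M : Matrix ι κ ℝ) : ℝ :=
  ⨆ x : {x : κ → ℝ // pnorm p x ≤ 1}, pnorm p (M.mulVec x)

section aux

variable {n : ℕ} {p : ℝ} {q : ℝ≥0∞} [Fact (1 ≤ q)]

lemma pnorm_eq_norm (hp : 1 ≤ p) (hq : q.toReal = p) (v : Fin n → ℝ) :
    pnorm p v = ‖(WithLp.equiv q (Fin n → ℝ)).symm v‖ := by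
  rw [PiLp.norm_eq_sum (by rw [hq]; linarith)]
  simp [pnorm, hq, Real.norm_eq_abs]

lemma pnorm_mulVec_le (hp : 1 ≤ p) (hq : q.toReal = p)
    (M : Matrix (Fin n) (Fin n) ℝ) (v : Fin n → ℝ) :
    pnorm p (M.mulVec v) ≤ opNorm p M * pnorm p v := by
  set E := PiLp q (fun _ : Fin n => ℝ)
  let φ : E ≃L[ℝ] (Fin n → ℝ) := PiLp.continuousLinearEquiv q ℝ _
  let L : E →L[ℝ] E := LinearMap.toContinuousLinearMap
    ((φ.symm.toLinearMap.comp M.mulVecLin).comp φ.toLinearMap)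
  have hLapp : ∀ w : Fin n → ℝ, L (φ.symm w) = φ.symm (M.mulVec w) := by
    intro w; simp [L, φ]
  have hbdd : BddAbove (Set.range fun x : {x : Fin n → ℝ // pnorm p x ≤ 1} =>
      pnorm p (M.mulVec x)) := by
    refine ⟨‖L‖, ?_⟩
    rintro _ ⟨⟨w, hw⟩, rfl⟩
    show pnorm p (M.mulVec w) ≤ ‖L‖
    rw [pnorm_eq_norm hp hq]
    show ‖φ.symm (M.mulVec w)‖ ≤ ‖L‖
    rw [← hLapp]
    calc ‖L (φ.symm w)‖ ≤ ‖L‖ * ‖φ.symm w‖ := L.le_opNorm _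
    _ ≤ ‖L‖ * 1 := by
        refine mul_le_mul_of_nonneg_left ?_ (norm_nonneg _)
        show ‖(WithLp.equiv q (Fin n → ℝ)).symm w‖ ≤ 1
        rw [← pnorm_eq_norm hp hq]; exact hw
    _ = ‖L‖ := mul_one _
  rcases eq_or_lt_of_le (by rw [pnorm_eq_norm hp hq v]; exact norm_nonneg _ :
      (0 : ℝ) ≤ pnorm p v) with h0 | h0
  · have hv : v = 0 := by
      have := (norm_eq_zero.mp ((pnorm_eq_norm hp hq v) ▸ h0.symm))
      simpa using congrArg WithLp.ofLp this
    simp [hv, Matrix.mulVec_zero, ← h0]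
    rw [pnorm_eq_norm hp hq]
    simp
  · set c := pnorm p v with hc
    have hu : pnorm p (c⁻¹ • v) ≤ 1 := by
      rw [pnorm_eq_norm hp hq]
      have : (WithLp.equiv q (Fin n → ℝ)).symm (c⁻¹ • v)
          = c⁻¹ • (WithLp.equiv q (Fin n → ℝ)).symm v := by
        simp
      rw [this, norm_smul, ← pnorm_eq_norm hp hq, ← hc, Real.norm_eq_abs,
        abs_of_pos (inv_pos.mpr h0), inv_mul_cancel₀ h0.ne']
    have key : pnorm p (M.mulVec (c⁻¹ • v)) ≤ opNorm p M :=
      le_ciSup hbdd (⟨c⁻¹ • v, hu⟩ : {x : Fin n → ℝ // pnorm p x ≤ 1})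
    have hmv : M.mulVec (c⁻¹ • v) = c⁻¹ • M.mulVec v := by
      rw [Matrix.mulVec_smul]
    rw [hmv] at key
    have : pnorm p (c⁻¹ • M.mulVec v) = c⁻¹ * pnorm p (M.mulVec v) := by
      rw [pnorm_eq_norm hp hq, pnorm_eq_norm hp hq]
      have : (WithLp.equiv q (Fin n → ℝ)).symm (c⁻¹ • M.mulVec v)
          = c⁻¹ • (WithLp.equiv q (Fin n → ℝ)).symm (M.mulVec v) := by simp
      rw [this, norm_smul, Real.norm_eq_abs, abs_of_pos (inv_pos.mpr h0)]
    rw [this] at key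
    calc pnorm p (M.mulVec v) = c * (c⁻¹ * pnorm p (M.mulVec v)) := by
          field_simp
    _ ≤ c * opNorm p M := mul_le_mul_of_nonneg_left key h0.le
    _ = opNorm p M * c := mul_comm _ _

end aux

/-- Coppel's inequality: if `ẋ = A(t)x` with `A` continuous and the matrix
measure `μ_p(A(t)) ≤ −β < 0` for all `t ≥ t₀`, then
`‖x(t)‖_p ≤ e^{−β(t−t₀)} ‖x(t₀)‖_p` for all `t ≥ t₀`. -/
theorem coppel (p : ℝ) (hp : 1 ≤ p) (n : ℕ)
    (A : ℝ → Matrix (Fin n) (Fin n) ℝ) (hA : Continuous A)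
    (t₀ β : ℝ) (hβ : 0 < β) (μ : ℝ → ℝ)
    (hμ : ∀ t, t₀ ≤ t →
      Tendsto (fun h : ℝ =>
          (opNorm p ((1 : Matrix (Fin n) (Fin n) ℝ) + h • A t) - 1) / h)
        (𝓝[>] 0) (𝓝 (μ t)))
    (hμβ : ∀ t, t₀ ≤ t → μ t ≤ -β)
    (x : ℝ → Fin n → ℝ)
    (hx : ∀ t, t₀ ≤ t → HasDerivAt x ((A t).mulVec (x t)) t) :
    ∀ t, t₀ ≤ t → pnorm p (x t) ≤ Real.exp (-β * (t - t₀)) * pnorm p (x t₀) := by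
  intro T hT
  set q : ℝ≥0∞ := ENNReal.ofReal p with hqdef
  have hq : q.toReal = p := ENNReal.toReal_ofReal (by linarith)
  haveI : Fact ((1:ℝ≥0∞) ≤ q) := ⟨ENNReal.one_le_ofReal.mpr hp⟩
  set E := PiLp q (fun _ : Fin n => ℝ) with hE
  let e := (WithLp.equiv q (Fin n → ℝ)).symm
  set X : ℝ → E := fun s => e (x s) with hX
  set N : ℝ → ℝ := fun s => ‖X s‖ with hN
  have hNp : ∀ s, pnorm p (x s) = N s := fun s => pnorm_eq_norm hp hq _
  -- derivative of X
  let φ : E ≃L[ℝ] (Fin n → ℝ) := PiLp.continuousLinearEquiv q ℝ _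
  have hXd : ∀ s, t₀ ≤ s → HasDerivAt X (e ((A s).mulVec (x s))) s := by
    intro s hs
    have := (φ.symm :(Fin n → ℝ) →L[ℝ] E).hasFDerivAt.comp_hasDerivAt s (hx s hs)
    exact this
  -- continuity of N on [t₀, T]
  have hNc : ContinuousOn N (Set.Icc t₀ T) := by
    intro s hs
    exact ((hXd s hs.1).continuousAt.norm).continuousWithinAt
  -- Dini derivative estimate
  have key : ∀ s ∈ Set.Ico t₀ T, ∀ r, -β * N s < r →
      ∃ᶠ z in 𝓝[>] s, (z - s)⁻¹ * (N z - N s) < r := by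
    intro s hs r hr
    have hs0 : t₀ ≤ s := hs.1
    -- error term
    have herr : Tendsto (fun z => ‖X z - X s - (z - s) • e ((A s).mulVec (x s))‖ / (z - s))
        (𝓝[>] s) (𝓝 0) := by
      have h1 : (fun z => X z - X s - (z - s) • e ((A s).mulVec (x s)))
          =o[𝓝 s] fun z => z - s := hasDerivAt_iff_isLittleO.mp (hXd s hs0)
      have := h1.norm_left.tendsto_div_nhds_zero
      exact this.mono_left nhdsWithin_le_nhds
    -- the map z ↦ z - s into 𝓝[>] 0
    have hsub : Tendsto (fun z : ℝ => z - s) (𝓝[>] s) (𝓝[>] 0) := by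
      rw [tendsto_nhdsWithin_iff]
      refine ⟨?_, ?_⟩
      · have h2 : Tendsto (fun z : ℝ => z - s) (𝓝 s) (𝓝 (s - s)) :=
          (continuous_id.sub continuous_const).tendsto s
        simpa using h2.mono_left nhdsWithin_le_nhds
      · filter_upwards [self_mem_nhdsWithin] with z hz
        exact sub_pos.mpr (Set.mem_Ioi.mp hz)
    have hμs : Tendsto (fun z : ℝ =>
        (opNorm p ((1 : Matrix (Fin n) (Fin n) ℝ) + (z - s) • A s) - 1) / (z - s))
        (𝓝[>] s) (𝓝 (μ s)) := (hμ s hs0).comp hsub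
    -- the combined bound F
    have hF : Tendsto (fun z : ℝ =>
        (opNorm p ((1 : Matrix (Fin n) (Fin n) ℝ) + (z - s) • A s) - 1) / (z - s) * N s
          + ‖X z - X s - (z - s) • e ((A s).mulVec (x s))‖ / (z - s))
        (𝓝[>] s) (𝓝 (μ s * N s + 0)) := (hμs.mul_const _).add herr
    have hlt : μ s * N s + 0 < r := by
      have hNs : 0 ≤ N s := norm_nonneg _
      have : μ s * N s ≤ -β * N s := mul_le_mul_of_nonneg_right (hμβ s hs0) hNs
      linarith
    have hev : ∀ᶠ z in 𝓝[>] s,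
        (opNorm p ((1 : Matrix (Fin n) (Fin n) ℝ) + (z - s) • A s) - 1) / (z - s) * N s
          + ‖X z - X s - (z - s) • e ((A s).mulVec (x s))‖ / (z - s) < r :=
      hF.eventually_lt_const hlt
    -- slope bound
    have hslope : ∀ᶠ z in 𝓝[>] s, (z - s)⁻¹ * (N z - N s) ≤
        (opNorm p ((1 : Matrix (Fin n) (Fin n) ℝ) + (z - s) • A s) - 1) / (z - s) * N s
          + ‖X z - X s - (z - s) • e ((A s).mulVec (x s))‖ / (z - s) := by
      filter_upwards [self_mem_nhdsWithin] with z hz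
      have hzs : 0 < z - s := sub_pos.mpr hz
      set h := z - s with hh
      set M : Matrix (Fin n) (Fin n) ℝ := 1 + h • A s with hM
      have hmul : M.mulVec (x s) = x s + h • (A s).mulVec (x s) := by
        rw [hM, Matrix.add_mulVec, Matrix.one_mulVec, Matrix.smul_mulVec]
      have h1 : N z ≤ opNorm p M * N s + ‖X z - X s - h • e ((A s).mulVec (x s))‖ := by
        set a : E := X s + h • e ((A s).mulVec (x s)) with ha
        have triangle : N z ≤ ‖a‖ + ‖X z - a‖ := by
          have h2 := norm_add_le a (X z - a)
          simpa using h2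
        have heq : ‖a‖ = pnorm p (M.mulVec (x s)) := by
          rw [hmul, pnorm_eq_norm hp hq]
          rfl
        have heq2 : X z - a = X z - X s - h • e ((A s).mulVec (x s)) := by
          rw [ha]; abel
        have h3 := pnorm_mulVec_le (q := q) hp hq M (x s)
        rw [hNp s] at h3
        rw [heq, heq2] at triangle
        linarith
      -- divide by h
      have expand : h * ((opNorm p M - 1) / h * N s
          + ‖X z - X s - h • e ((A s).mulVec (x s))‖ / h)
          = opNorm p M * N s - N s + ‖X z - X s - h • e ((A s).mulVec (x s))‖ := by
        field_simp
      rw [inv_mul_le_iff₀ hzs, expand]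
      linarith
    have := hslope.and hev
    refine this.frequently.mono ?_
    rintro z ⟨h1, h2⟩
    exact lt_of_le_of_lt h1 h2
  -- apply Gronwall
  have := le_gronwallBound_of_liminf_deriv_right_le (f := N) (f' := fun s => -β * N s)
    (δ := N t₀) (K := -β) (ε := 0) (a := t₀) (b := T) hNc key le_rfl
    (fun s _ => by simp) T (Set.mem_Icc.mpr ⟨hT, le_rfl⟩)
  rw [gronwallBound_ε0] at this
  rw [hNp T, hNp t₀]
  linarith [this, mul_comm (N t₀) (Real.exp (-β * (T - t₀)))]
end

section
/- The function t ↦ (w(t), z(t)) = (w₀ e^{−2t}, −w₀ e^{t}) is, for each w₀ ∈ ℝ, the unique solution of the DAE ẇ = −w + e^{−3t} z, 0 = e^{3t} w + z with w(0) = w₀, and consequently this DAE is not contracting: there is no c, α > 0 with ‖(w₁(t),z₁(t)) − (w₂(t),z₂(t))‖ ≤ c e^{−αt} ‖(w₁(0),z₁(0)) − (w₂(0),z₂(0))‖ for all pairs of solutions. -/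
open Filter Topology

/-- A (C¹) solution of the DAE `ẇ = −w + e^{−3t} z`, `0 = e^{3t} w + z`. -/
def IsDAESol (w z : ℝ → ℝ) : Prop :=
  (∀ t, HasDerivAt w (-(w t) + Real.exp (-3 * t) * z t) t) ∧
  (∀ t, 0 = Real.exp (3 * t) * w t + z t)

lemma exp_mul_exp (a b : ℝ) : Real.exp a * Real.exp b = Real.exp (a + b) :=
  (Real.exp_add a b).symm

lemma dae_sol_form (w z : ℝ → ℝ) (w₀ : ℝ) (h : IsDAESol w z) (h0 : w 0 = w₀) :
    ∀ t, w t = w₀ * Real.exp (-2 * t) ∧ z t = -(w₀ * Real.exp t) := by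
  obtain ⟨hD, hC⟩ := h
  have hz : ∀ t, z t = -(Real.exp (3 * t) * w t) := by
    intro t; linarith [hC t]
  have hD2 : ∀ t, HasDerivAt w (-2 * w t) t := by
    intro t
    have := hD t
    rw [hz t] at this
    have hE : Real.exp (-3 * t) * Real.exp (3 * t) = 1 := by
      rw [exp_mul_exp, show -3 * t + 3 * t = 0 by ring, Real.exp_zero]
    have he : -(w t) + Real.exp (-3 * t) * -(Real.exp (3 * t) * w t) = -2 * w t := by
      linear_combination (-(w t)) * hE
    rwa [he] at this
  set g : ℝ → ℝ := fun t => w t * Real.exp (2 * t) with hg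
  have hg' : ∀ t, HasDerivAt g 0 t := by
    intro t
    have h1 : HasDerivAt (fun t : ℝ => Real.exp (2 * t)) (Real.exp (2 * t) * 2) t := by
      simpa using ((hasDerivAt_id t).const_mul 2).exp
    have := (hD2 t).mul h1
    rw [show (0:ℝ) = -2 * w t * Real.exp (2 * t) + w t * (Real.exp (2 * t) * 2) by ring]; exact this
  have hconst : ∀ t, g t = g 0 := by
    intro t
    have hdiff : Differentiable ℝ g := fun x => (hg' x).differentiableAt
    have hderiv : ∀ x, deriv g x = 0 := fun x => (hg' x).deriv
    exact is_const_of_deriv_eq_zero hdiff hderiv t 0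
  intro t
  have hgt := hconst t
  have hkey : w t * Real.exp (2 * t) = w₀ := by
    simpa [hg, h0] using hgt
  have hE2 : Real.exp (-2 * t) * Real.exp (2 * t) = 1 := by
    rw [exp_mul_exp, show -2 * t + 2 * t = 0 by ring, Real.exp_zero]
  have hwt : w t = w₀ * Real.exp (-2 * t) := by
    have hne : Real.exp (2 * t) ≠ 0 := Real.exp_ne_zero _
    apply mul_right_cancel₀ hne
    rw [hkey, mul_assoc, hE2, mul_one]
  refine ⟨hwt, ?_⟩
  rw [hz t, hwt]
  have hE3 : Real.exp (3 * t) * Real.exp (-2 * t) = Real.exp t := by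
    rw [exp_mul_exp, show 3 * t + -2 * t = t by ring]
  linear_combination (-w₀) * hE3

/-- The unique solution of the DAE with `w(0) = w₀` is
`(w(t), z(t)) = (w₀ e^{−2t}, −w₀ e^{t})`, and consequently the DAE is not
contracting. -/
theorem dae_example_not_contracting :
    (∀ (w z : ℝ → ℝ) (w₀ : ℝ), IsDAESol w z → w 0 = w₀ →
      ∀ t, w t = w₀ * Real.exp (-2 * t) ∧ z t = -(w₀ * Real.exp t)) ∧
    ¬ ∃ c α : ℝ, 0 < c ∧ 0 < α ∧
      ∀ w₁ z₁ w₂ z₂ : ℝ → ℝ, IsDAESol w₁ z₁ → IsDAESol w₂ z₂ →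
        ∀ t, 0 ≤ t →
          max |w₁ t - w₂ t| |z₁ t - z₂ t| ≤
            c * Real.exp (-α * t) * max |w₁ 0 - w₂ 0| |z₁ 0 - z₂ 0| := by
  constructor
  · exact dae_sol_form
  · rintro ⟨c, α, hc, hα, H⟩
    set w₁ : ℝ → ℝ := fun t => Real.exp (-2 * t)
    set z₁ : ℝ → ℝ := fun t => -Real.exp t
    have hsol1 : IsDAESol w₁ z₁ := by
      constructor
      · intro t
        have h1 : HasDerivAt w₁ (Real.exp (-2 * t) * -2) t := by
          have h2 := ((hasDerivAt_id t).const_mul (-2)).exp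
          simp only [id_eq, mul_one] at h2
          exact h2
        have hE : Real.exp (-3 * t) * Real.exp t = Real.exp (-2 * t) := by
          rw [exp_mul_exp, show -3 * t + t = -2 * t by ring]
        have he : -(w₁ t) + Real.exp (-3 * t) * z₁ t = Real.exp (-2 * t) * -2 := by
          simp only [w₁, z₁]
          linear_combination (-1 : ℝ) * hE
        rw [he]; exact h1
      · intro t
        have hE : Real.exp (3 * t) * Real.exp (-2 * t) = Real.exp t := by
          rw [exp_mul_exp, show 3 * t + -2 * t = t by ring]
        simp only [w₁, z₁]
        linarith
    have hsol2 : IsDAESol (fun _ => 0) (fun _ => 0) := by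
      constructor
      · intro t; simpa using hasDerivAt_const t (0 : ℝ)
      · intro t; simp
    set t₀ : ℝ := Real.log (c + 1) with ht₀
    have ht₀pos : 0 ≤ t₀ := Real.log_nonneg (by linarith)
    have hH := H w₁ z₁ (fun _ => 0) (fun _ => 0) hsol1 hsol2 t₀ ht₀pos
    simp only [w₁, z₁, sub_zero] at hH
    have h1 : |Real.exp (-2 * t₀)| = Real.exp (-2 * t₀) := abs_of_pos (Real.exp_pos _)
    have h2 : |-Real.exp t₀| = Real.exp t₀ := by
      rw [abs_neg]; exact abs_of_pos (Real.exp_pos _)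
    have h3 : |Real.exp (-2 * 0 : ℝ)| = 1 := by norm_num
    have h4 : |-Real.exp (0 : ℝ)| = 1 := by norm_num
    rw [h1, h2, h3, h4, max_self, mul_one] at hH
    have hle : Real.exp t₀ ≤ max (Real.exp (-2 * t₀)) (Real.exp t₀) := le_max_right _ _
    have key : Real.exp t₀ ≤ c * Real.exp (-α * t₀) := le_trans hle hH
    have hexp : Real.exp (-α * t₀) ≤ 1 := Real.exp_le_one_iff.mpr (by nlinarith)
    have hct : Real.exp t₀ = c + 1 := Real.exp_log (by linarith)
    nlinarith [Real.exp_pos (-α * t₀)]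
end

section
/- (Exponential stability transfer, linear case) Suppose the auxiliary ODE ξ̇_γ = Aξ_γ + Bν_γ, ν̇_γ = −F^{-1}[(γC_g + Ċ_g + C_g A)ξ_γ + (γF + Ḟ + C_g B)ν_γ] is uniformly exponentially stable, i.e., there exist c, α > 0 with ‖(ξ_γ(t), ν_γ(t))‖ ≤ c e^{−α(t−t₀)}‖(ξ_γ(t₀), ν_γ(t₀))‖ for all solutions. Then every solution of the variational DAE ξ̇ = Aξ + Bν, 0 = C_g ξ + Fν satisfies the same exponential bound. -/
open Filter Topology Matrix

/-- (Exponential stability transfer, linear case.) If the auxiliary ODE of the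
variational DAE `ξ̇ = Aξ + Bν, 0 = C_g ξ + F ν` is uniformly exponentially
stable, then every (C¹) solution of the variational DAE satisfies the same
exponential bound. -/
theorem exp_stability_transfer (n m : ℕ) (t₀ γ : ℝ) (hγ : 0 ≤ γ)
    (A : ℝ → Matrix (Fin n) (Fin n) ℝ)
    (B : ℝ → Matrix (Fin n) (Fin m) ℝ)
    (Cg Cg' : ℝ → Matrix (Fin m) (Fin n) ℝ)
    (F F' : ℝ → Matrix (Fin m) (Fin m) ℝ)
    (hA : Continuous A) (hB : Continuous B)
    (hCg : ∀ (i : Fin m) (j : Fin n) (t : ℝ),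
      HasDerivAt (fun s => Cg s i j) (Cg' t i j) t)
    (hF : ∀ (i j : Fin m) (t : ℝ),
      HasDerivAt (fun s => F s i j) (F' t i j) t)
    (hFinv : ∀ t, IsUnit (F t))
    (c α : ℝ) (hc : 0 < c) (hα : 0 < α)
    (hstab : ∀ (ξγ : ℝ → Fin n → ℝ) (νγ : ℝ → Fin m → ℝ),
      (∀ t, HasDerivAt ξγ ((A t) *ᵥ ξγ t + (B t) *ᵥ νγ t) t) →
      (∀ t, HasDerivAt νγ
        (-((F t)⁻¹ *ᵥ ((γ • Cg t + Cg' t + Cg t * A t) *ᵥ ξγ t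
          + (γ • F t + F' t + Cg t * B t) *ᵥ νγ t))) t) →
      ∀ t, t₀ ≤ t →
        ‖(ξγ t, νγ t)‖ ≤ c * Real.exp (-α * (t - t₀)) * ‖(ξγ t₀, νγ t₀)‖) :
    ∀ (ξ : ℝ → Fin n → ℝ) (ν : ℝ → Fin m → ℝ),
      (∀ t, HasDerivAt ξ ((A t) *ᵥ ξ t + (B t) *ᵥ ν t) t) →
      (∀ t, (0 : Fin m → ℝ) = Cg t *ᵥ ξ t + F t *ᵥ ν t) →
      Differentiable ℝ ν →
      ∀ t, t₀ ≤ t →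
        ‖(ξ t, ν t)‖ ≤ c * Real.exp (-α * (t - t₀)) * ‖(ξ t₀, ν t₀)‖ := by

  intro ξ ν hξ h0 hν t ht
  have hν' : ∀ s, HasDerivAt ν (deriv ν s) s := fun s => (hν s).hasDerivAt
  -- key differentiated constraint
  have key : ∀ s, F s *ᵥ deriv ν s =
      -(Cg' s *ᵥ ξ s + Cg s *ᵥ (A s *ᵥ ξ s + B s *ᵥ ν s) + F' s *ᵥ ν s) := by
    intro s
    funext i
    have hξc : ∀ j, HasDerivAt (fun u => ξ u j) ((A s *ᵥ ξ s + B s *ᵥ ν s) j) s :=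
      fun j => (hasDerivAt_pi.mp (hξ s)) j
    have hνc : ∀ j, HasDerivAt (fun u => ν u j) (deriv ν s j) s :=
      fun j => (hasDerivAt_pi.mp (hν' s)) j
    have hsum : HasDerivAt
        (fun u => (∑ j, Cg u i j * ξ u j) + (∑ j, F u i j * ν u j))
        ((∑ j, (Cg' s i j * ξ s j + Cg s i j * (A s *ᵥ ξ s + B s *ᵥ ν s) j))
          + (∑ j, (F' s i j * ν s j + F s i j * deriv ν s j))) s := by
      apply HasDerivAt.add
      · exact HasDerivAt.fun_sum fun j _ => (hCg i j s).mul (hξc j)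
      · exact HasDerivAt.fun_sum fun j _ => (hF i j s).mul (hνc j)
    have hconst : (fun u => (∑ j, Cg u i j * ξ u j) + (∑ j, F u i j * ν u j))
        = fun _ => (0 : ℝ) := by
      funext u
      have := congrFun (h0 u) i
      simpa [Matrix.mulVec, dotProduct] using this.symm
    have hzero := hsum
    rw [hconst] at hzero
    have heq := hzero.unique (hasDerivAt_const s 0)
    have heq' : (∑ j, (Cg' s i j * ξ s j + Cg s i j * (A s *ᵥ ξ s + B s *ᵥ ν s) j))
        + (∑ j, (F' s i j * ν s j + F s i j * deriv ν s j)) = 0 := heq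
    simp only [Matrix.mulVec, dotProduct, Pi.add_apply, Pi.neg_apply,
      Finset.sum_add_distrib] at heq' ⊢
    linarith
  -- ν satisfies the auxiliary ODE
  have hνODE : ∀ s, HasDerivAt ν
      (-((F s)⁻¹ *ᵥ ((γ • Cg s + Cg' s + Cg s * A s) *ᵥ ξ s
        + (γ • F s + F' s + Cg s * B s) *ᵥ ν s))) s := by
    intro s
    have hdet : IsUnit (F s).det := (Matrix.isUnit_iff_isUnit_det _).mp (hFinv s)
    have hinner : (γ • Cg s + Cg' s + Cg s * A s) *ᵥ ξ s
        + (γ • F s + F' s + Cg s * B s) *ᵥ ν s = -(F s *ᵥ deriv ν s) := by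
      have h0s : Cg s *ᵥ ξ s + F s *ᵥ ν s = 0 := (h0 s).symm
      have expand : (γ • Cg s + Cg' s + Cg s * A s) *ᵥ ξ s
          + (γ • F s + F' s + Cg s * B s) *ᵥ ν s
          = γ • (Cg s *ᵥ ξ s + F s *ᵥ ν s)
            + (Cg' s *ᵥ ξ s + Cg s *ᵥ (A s *ᵥ ξ s + B s *ᵥ ν s) + F' s *ᵥ ν s) := by
        simp only [Matrix.add_mulVec, Matrix.smul_mulVec, Matrix.mulVec_mulVec,
          Matrix.mulVec_add, smul_add]
        abel
      rw [expand, h0s, smul_zero, zero_add, key s, neg_neg]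
    rw [hinner, Matrix.mulVec_neg, neg_neg, Matrix.mulVec_mulVec, Matrix.nonsing_inv_mul _ hdet,
      Matrix.one_mulVec]
    exact hν' s
  exact hstab ξ ν hξ hνODE t ht
end
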